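/- Support and L² bound on the block-averaging errors, plateau profile (Proposition 5.2 under condition (2.4)): Fix 0 < δ ≤ 1/3200 and ε > 0. Let u ∈ C¹(ℝ², [0,1]) satisfy u(x) = 0 for |x|_∞ ≥ 1/2 + δ and u(x) = 1 for |x|_∞ ≤ 1/2 − δ. Set N := ⌊δ^{-2}⌋ + 1. For z ∈ ℝ² define β_z(x) := u((x−z)/ε), α_z^{(1)}(x₁,x₂) := (∫_{−∞}^{x₂} β_z(x₁,s) ds) e₁, Q_z := {x : |x−z|_∞ ≤ Nε}, Q_z' := {x : |x−z|_∞ ≤ (N+δ^{-1})ε}, M_z^{(1)} := (2Nε)^{-1} 1_{Q_z} e₁, and 𝓔_z^{(1)} := M_z^{(1)} − (2Nε²)^{-1} Σ_{k=−N}^{N} ( α^{(1)}_{z+kε e₁−Nε e₂} − α^{(1)}_{z+kε e₁+Nε e₂} ). Then 𝓔_z^{(1)}(x) = 0 for all x ∉ Q_z', and ∫_{ℝ²} |𝓔_z^{(1)}|² dx ≤ 100 δ. -/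

import Mathlib

open MeasureTheory

set_option linter.unusedSectionVars false
set_option linter.unusedVariables false
set_option maxHeartbeats 1000000
noncomputable section

/-- Standard unit vector `e₁`. -/
def e1 : ℝ × ℝ := (1, 0)

/-- Standard unit vector `e₂`. -/
def e2 : ℝ × ℝ := (0, 1)

/-- The rescaled profile `β_z(x) = u((x - z)/ε)`. -/
def betaZ (u : ℝ × ℝ → ℝ) (ε : ℝ) (z x : ℝ × ℝ) : ℝ := u (ε⁻¹ • (x - z))

/-- The vector potential `α_z^{(1)}(x) = (∫_{-∞}^{x₂} β_z(x₁, s) ds) e₁`. -/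
def alpha1 (u : ℝ × ℝ → ℝ) (ε : ℝ) (z x : ℝ × ℝ) : ℝ × ℝ :=
  (∫ s in Set.Iic x.2, betaZ u ε z (x.1, s)) • e1

/-- `N = ⌊δ⁻²⌋ + 1`. -/
def blockN (δ : ℝ) : ℕ := ⌊(δ ^ 2)⁻¹⌋₊ + 1

/-- The square `Q_z = {x : |x - z|_∞ ≤ Nε}` (the norm on `ℝ × ℝ` is the sup norm). -/
def Qz (N : ℕ) (ε : ℝ) (z : ℝ × ℝ) : Set (ℝ × ℝ) := {x | ‖x - z‖ ≤ N * ε}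

/-- The enlarged square `Q_z' = {x : |x - z|_∞ ≤ (N + δ⁻¹)ε}`. -/
def Qz' (N : ℕ) (δ ε : ℝ) (z : ℝ × ℝ) : Set (ℝ × ℝ) := {x | ‖x - z‖ ≤ (N + δ⁻¹) * ε}

/-- `M_z^{(1)} = (2Nε)⁻¹ 1_{Q_z} e₁`. -/
def Mz1 (N : ℕ) (ε : ℝ) (z x : ℝ × ℝ) : ℝ × ℝ :=
  ((2 * N * ε)⁻¹ * (Qz N ε z).indicator (fun _ => (1 : ℝ)) x) • e1

/-- The block-averaging error
`𝓔_z^{(1)} = M_z^{(1)} - (2Nε²)⁻¹ Σ_{k=-N}^{N} (α^{(1)}_{z+kεe₁-Nεe₂} - α^{(1)}_{z+kεe₁+Nεe₂})`. -/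
def Ez1 (u : ℝ × ℝ → ℝ) (δ ε : ℝ) (z x : ℝ × ℝ) : ℝ × ℝ :=
  Mz1 (blockN δ) ε z x -
    (2 * (blockN δ : ℝ) * ε ^ 2)⁻¹ •
      (∑ k ∈ Finset.Icc (-(blockN δ : ℤ)) (blockN δ : ℤ),
        (alpha1 u ε (z + ((k : ℝ) * ε) • e1 - ((blockN δ : ℝ) * ε) • e2) x -
          alpha1 u ε (z + ((k : ℝ) * ε) • e1 + ((blockN δ : ℝ) * ε) • e2) x))

/-- total mass of a horizontal slice -/
def Iu (u : ℝ × ℝ → ℝ) (t : ℝ) : ℝ := ∫ s, u (t, s)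

def Dk (u : ℝ × ℝ → ℝ) (N : ℝ) (t η : ℝ) : ℝ := ∫ σ in Set.Ioc (η - N) (η + N), u (t, σ)

def Gf (u : ℝ × ℝ → ℝ) (N : ℕ) (p : ℝ × ℝ) : ℝ :=
  Set.indicator {q : ℝ × ℝ | ‖q‖ ≤ (N : ℝ)} (fun _ => (1 : ℝ)) p
    - ∑ k ∈ Finset.Icc (-(N : ℤ)) (N : ℤ), Dk u N (p.1 - k) p.2

lemma norm_smul_e1 (a : ℝ) : ‖a • e1‖ = |a| := by
  simp [e1, Prod.norm_def, Prod.smul_mk, abs_nonneg]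

section Ctx

variable {u : ℝ × ℝ → ℝ} {δ : ℝ}
variable (hδ0 : 0 < δ) (hδ : δ ≤ 1 / 3200)
variable (hc : Continuous u) (hu01 : ∀ x, u x ∈ Set.Icc (0 : ℝ) 1)
variable (hu0 : ∀ x : ℝ × ℝ, 1 / 2 + δ ≤ ‖x‖ → u x = 0)
variable (hu1 : ∀ x : ℝ × ℝ, ‖x‖ ≤ 1 / 2 - δ → u x = 1)

include hδ0 hδ hu0 hu01 in
lemma u_zero_of_one_le {x : ℝ × ℝ} (h : (1:ℝ) ≤ ‖x‖) : u x = 0 := by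
  apply hu0; nlinarith

include hδ0 hδ hu0 hu01 hc in
lemma u_int (t : ℝ) : Integrable (fun s => u (t, s)) := by
  apply Integrable.mono' (g := Set.indicator (Set.Icc (-1 : ℝ) 1) (fun _ => (1:ℝ)))
  · rw [integrable_indicator_iff measurableSet_Icc]
    exact integrableOn_const (by simp [Real.volume_Icc])
  · exact (hc.comp (Continuous.prodMk_right t)).aestronglyMeasurable
  · refine Filter.Eventually.of_forall (fun s => ?_)
    rw [Real.norm_eq_abs, abs_of_nonneg (hu01 (t, s)).1]
    by_cases hs : s ∈ Set.Icc (-1 : ℝ) 1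
    · rw [Set.indicator_of_mem hs]; exact (hu01 (t, s)).2
    · rw [Set.indicator_of_notMem hs]
      have : (1:ℝ) ≤ |s| := by
        simp only [Set.mem_Icc, not_and_or, not_le] at hs
        rcases hs with h | h <;> [exact le_abs.2 (Or.inr (by linarith)); exact le_abs.2 (Or.inl h.le)]
      have : (1:ℝ) ≤ ‖(t, s)‖ := le_trans this (by rw [Prod.norm_def]; exact le_max_of_le_right (by rw [Real.norm_eq_abs]))
      rw [u_zero_of_one_le hδ0 hδ hu01 hu0 this]

end Ctx

section Ctx2
variable {u : ℝ × ℝ → ℝ} {δ : ℝ}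
variable (hδ0 : 0 < δ) (hδ : δ ≤ 1 / 3200)
variable (hc : Continuous u) (hu01 : ∀ x, u x ∈ Set.Icc (0 : ℝ) 1)
variable (hu0 : ∀ x : ℝ × ℝ, 1 / 2 + δ ≤ ‖x‖ → u x = 0)
variable (hu1 : ∀ x : ℝ × ℝ, ‖x‖ ≤ 1 / 2 - δ → u x = 1)

include hδ0 hδ hc hu01 hu0

lemma Iu_nonneg (t : ℝ) : 0 ≤ Iu u t :=
  integral_nonneg (fun s => (hu01 (t, s)).1)

lemma Iu_le (t : ℝ) : Iu u t ≤ 1 + 2 * δ := by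
  have hind : Integrable (Set.indicator (Set.Icc (-(1/2+δ)) (1/2+δ)) (fun _ => (1:ℝ))) := by
    rw [integrable_indicator_iff measurableSet_Icc]
    exact integrableOn_const (by simp [Real.volume_Icc])
  have hle : ∀ s : ℝ, u (t, s) ≤ Set.indicator (Set.Icc (-(1/2+δ)) (1/2+δ)) (fun _ => (1:ℝ)) s := by
    intro s
    by_cases hs : s ∈ Set.Icc (-(1/2+δ)) (1/2+δ)
    · rw [Set.indicator_of_mem hs]; exact (hu01 (t, s)).2
    · rw [Set.indicator_of_notMem hs]
      have h1 : 1/2 + δ ≤ |s| := by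
        simp only [Set.mem_Icc, not_and_or, not_le] at hs
        rcases hs with h | h <;> [exact le_abs.2 (Or.inr (by linarith)); exact le_abs.2 (Or.inl h.le)]
      have : 1/2 + δ ≤ ‖(t, s)‖ :=
        le_trans h1 (by rw [Prod.norm_def]; exact le_max_of_le_right (by rw [Real.norm_eq_abs]))
      rw [hu0 _ this]
  calc Iu u t ≤ ∫ s, Set.indicator (Set.Icc (-(1/2+δ)) (1/2+δ)) (fun _ => (1:ℝ)) s :=
        integral_mono (u_int hδ0 hδ hc hu01 hu0 t) hind hle
    _ = 1 + 2 * δ := by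
        rw [integral_indicator_const _ measurableSet_Icc]
        simp [Real.volume_Icc]
        rw [max_eq_left (by linarith)]
        ring

lemma Iu_zero {t : ℝ} (h : 1/2 + δ ≤ |t|) : Iu u t = 0 := by
  have : ∀ s : ℝ, u (t, s) = 0 := by
    intro s
    apply hu0
    exact le_trans h (by rw [Prod.norm_def]; exact le_max_of_le_left (by rw [Real.norm_eq_abs]))
  simp only [Iu, this, integral_zero]

include hu1 in
lemma Iu_ge {t : ℝ} (h : |t| ≤ 1/2 - δ) : 1 - 2 * δ ≤ Iu u t := by
  have hind : Integrable (Set.indicator (Set.Icc (-(1/2-δ)) (1/2-δ)) (fun _ => (1:ℝ))) := by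
    rw [integrable_indicator_iff measurableSet_Icc]
    exact integrableOn_const (by simp [Real.volume_Icc])
  have hle : ∀ s : ℝ, Set.indicator (Set.Icc (-(1/2-δ)) (1/2-δ)) (fun _ => (1:ℝ)) s ≤ u (t, s) := by
    intro s
    by_cases hs : s ∈ Set.Icc (-(1/2-δ)) (1/2-δ)
    · rw [Set.indicator_of_mem hs]
      refine le_of_eq (hu1 _ ?_).symm
      rw [Prod.norm_def, Real.norm_eq_abs, Real.norm_eq_abs]
      apply max_le h
      rw [Set.mem_Icc] at hs
      rw [abs_le]; constructor <;> linarith [hs.1, hs.2]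
    · rw [Set.indicator_of_notMem hs]; exact (hu01 (t, s)).1
  calc (1:ℝ) - 2*δ = ∫ s, Set.indicator (Set.Icc (-(1/2-δ)) (1/2-δ)) (fun _ => (1:ℝ)) s := by
        rw [integral_indicator_const _ measurableSet_Icc]
        simp [Real.volume_Icc]
        rw [max_eq_left (by linarith)]
        ring
    _ ≤ Iu u t := integral_mono hind (u_int hδ0 hδ hc hu01 hu0 t) hle

end Ctx2

section Ctx3
variable {u : ℝ × ℝ → ℝ} {δ : ℝ} {N : ℕ}
variable (hδ0 : 0 < δ) (hδ : δ ≤ 1 / 3200)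
variable (hc : Continuous u) (hu01 : ∀ x, u x ∈ Set.Icc (0 : ℝ) 1)
variable (hu0 : ∀ x : ℝ × ℝ, 1 / 2 + δ ≤ ‖x‖ → u x = 0)
variable (hu1 : ∀ x : ℝ × ℝ, ‖x‖ ≤ 1 / 2 - δ → u x = 1)
variable (hN : 1 ≤ N)

include hδ0 hδ hc hu01 hu0

lemma Dk_nonneg (t η : ℝ) : 0 ≤ Dk u N t η :=
  setIntegral_nonneg measurableSet_Ioc (fun s _ => (hu01 (t, s)).1)

lemma Dk_le_Iu (t η : ℝ) : Dk u N t η ≤ Iu u t :=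
  setIntegral_le_integral (u_int hδ0 hδ hc hu01 hu0 t)
    (Filter.Eventually.of_forall (fun s => (hu01 (t, s)).1))

lemma Dk_zero_t {t : ℝ} (h : 1/2 + δ ≤ |t|) (η : ℝ) : Dk u N t η = 0 := by
  apply setIntegral_eq_zero_of_forall_eq_zero
  intro s _
  exact hu0 _ (le_trans h (by rw [Prod.norm_def]; exact le_max_of_le_left (by rw [Real.norm_eq_abs])))

lemma Dk_zero_eta {η : ℝ} (h : (N:ℝ) + 1 ≤ |η|) (t : ℝ) : Dk u (N:ℝ) t η = 0 := by
  apply setIntegral_eq_zero_of_forall_eq_zero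
  intro s hs
  rw [Set.mem_Ioc] at hs
  apply u_zero_of_one_le hδ0 hδ hu01 hu0
  have h1 : (1:ℝ) ≤ |s| := by
    rcases le_abs.mp h with h3 | h3
    · have : (1:ℝ) ≤ s := by linarith [hs.1]
      exact le_abs.mpr (Or.inl this)
    · have : s ≤ -1 := by linarith [hs.2]
      exact le_abs.mpr (Or.inr (by linarith))
  exact le_trans h1 (by rw [Prod.norm_def]; exact le_max_of_le_right (by rw [Real.norm_eq_abs]))

lemma Dk_eq_Iu {η : ℝ} (h : |η| ≤ (N:ℝ) - 1) (t : ℝ) : Dk u (N:ℝ) t η = Iu u t := by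
  rw [Dk, Iu, ← integral_indicator measurableSet_Ioc]
  congr 1
  funext s
  by_cases hs : s ∈ Set.Ioc (η - (N:ℝ)) (η + (N:ℝ))
  · rw [Set.indicator_of_mem hs]
  · rw [Set.indicator_of_notMem hs]
    rw [Set.mem_Ioc, not_and_or, not_lt, not_le] at hs
    symm
    have ⟨hl, hr⟩ := abs_le.mp h
    apply u_zero_of_one_le hδ0 hδ hu01 hu0
    have h1 : (1:ℝ) ≤ |s| := by
      rcases hs with h3 | h3
      · exact le_abs.mpr (Or.inr (by linarith))
      · exact le_abs.mpr (Or.inl (by linarith))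
    exact le_trans h1 (by rw [Prod.norm_def]; exact le_max_of_le_right (by rw [Real.norm_eq_abs]))

include hN in
lemma sum_Dk_le (τ η : ℝ) :
    ∑ k ∈ Finset.Icc (-(N : ℤ)) (N : ℤ), Dk u (N:ℝ) (τ - k) η ≤ 3 := by
  set a : ℤ := ⌊τ⌋ with ha
  have key : ∀ k : ℤ, k ≠ a → k ≠ a + 1 → Iu u (τ - k) = 0 := by
    intro k h1 h2
    apply Iu_zero hδ0 hδ hc hu01 hu0
    have hfl := Int.floor_le τ
    have hfl2 := Int.lt_floor_add_one τ
    rcases lt_or_ge k a with hk | hk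
    · have : (k:ℝ) ≤ (a:ℝ) - 1 := by exact_mod_cast Int.le_sub_one_of_lt hk
      have : 1 ≤ τ - k := by linarith
      have := le_abs.mpr (Or.inl this)
      linarith
    · have hk2 : a + 2 ≤ k := by omega
      have : (a:ℝ) + 2 ≤ (k:ℝ) := by exact_mod_cast hk2
      have : τ - k ≤ -1 := by linarith
      have : 1 ≤ |τ - k| := le_abs.mpr (Or.inr (by linarith))
      linarith
  calc ∑ k ∈ Finset.Icc (-(N : ℤ)) (N : ℤ), Dk u (N:ℝ) (τ - k) η
      ≤ ∑ k ∈ Finset.Icc (-(N : ℤ)) (N : ℤ), Iu u (τ - k) :=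
        Finset.sum_le_sum (fun k _ => Dk_le_Iu hδ0 hδ hc hu01 hu0 _ _)
    _ = ∑ k ∈ Finset.Icc (-(N : ℤ)) (N : ℤ) ∩ {a, a+1}, Iu u (τ - k) := by
        apply (Finset.sum_subset (Finset.inter_subset_left) ?_).symm
        intro k hk hk2
        simp only [Finset.mem_inter, Finset.mem_insert, Finset.mem_singleton, not_and_or,
          not_or] at hk2
        rcases hk2 with h | h
        · exact absurd hk h
        · exact key k h.1 h.2
    _ ≤ ∑ k ∈ ({a, a+1} : Finset ℤ), Iu u (τ - k) := by
        apply Finset.sum_le_sum_of_subset_of_nonneg Finset.inter_subset_right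
        intro k _ _
        exact Iu_nonneg hδ0 hδ hc hu01 hu0 _
    _ ≤ 3 := by
        rw [Finset.sum_insert (by simp), Finset.sum_singleton]
        have b1 := Iu_le hδ0 hδ hc hu01 hu0 (τ - a)
        have b2 := Iu_le hδ0 hδ hc hu01 hu0 (τ - (a+1))
        push_cast at b2 ⊢
        linarith

lemma sum_Dk_nonneg (τ η : ℝ) :
    0 ≤ ∑ k ∈ Finset.Icc (-(N : ℤ)) (N : ℤ), Dk u (N:ℝ) (τ - k) η :=
  Finset.sum_nonneg (fun k _ => Dk_nonneg hδ0 hδ hc hu01 hu0 _ _)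

include hN in
lemma Gf_abs_le (p : ℝ × ℝ) : |Gf u N p| ≤ 4 := by
  rw [Gf, abs_sub_le_iff]
  have h1 : (0:ℝ) ≤ Set.indicator {q : ℝ × ℝ | ‖q‖ ≤ (N : ℝ)} (fun _ => (1 : ℝ)) p :=
    Set.indicator_nonneg (fun _ _ => zero_le_one) p
  have h2 : Set.indicator {q : ℝ × ℝ | ‖q‖ ≤ (N : ℝ)} (fun _ => (1 : ℝ)) p ≤ 1 :=
    Set.indicator_le_self' (fun _ _ => zero_le_one) p
  have h3 := sum_Dk_le hδ0 hδ hc hu01 hu0 hN p.1 p.2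
  have h4 := sum_Dk_nonneg hδ0 hδ hc hu01 hu0 (N := N) p.1 p.2
  constructor <;> linarith

lemma Gf_zero1 {p : ℝ × ℝ} (h : (N:ℝ) + 1 ≤ |p.1|) : Gf u N p = 0 := by
  rw [Gf]
  have hind : Set.indicator {q : ℝ × ℝ | ‖q‖ ≤ (N : ℝ)} (fun _ => (1 : ℝ)) p = 0 := by
    apply Set.indicator_of_notMem
    simp only [Set.mem_setOf_eq, not_le]
    calc (N:ℝ) < (N:ℝ) + 1 := by linarith
      _ ≤ |p.1| := h
      _ ≤ ‖p‖ := by rw [Prod.norm_def]; exact le_max_of_le_left (by rw [Real.norm_eq_abs])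
  rw [hind, Finset.sum_eq_zero, sub_zero]
  intro k hk
  simp only [Finset.mem_Icc] at hk
  apply Dk_zero_t hδ0 hδ hc hu01 hu0
  have hkabs : |(k:ℝ)| ≤ (N:ℝ) := by
    rw [abs_le]; constructor <;> [exact_mod_cast hk.1; exact_mod_cast hk.2]
  have : (1:ℝ) ≤ |p.1 - k| := by
    have := abs_sub_abs_le_abs_sub p.1 (k:ℝ)
    linarith
  linarith [hδ0.le, (by linarith : δ ≤ 1/2)]

lemma Gf_zero2 {p : ℝ × ℝ} (h : (N:ℝ) + 1 ≤ |p.2|) : Gf u N p = 0 := by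
  rw [Gf]
  have hind : Set.indicator {q : ℝ × ℝ | ‖q‖ ≤ (N : ℝ)} (fun _ => (1 : ℝ)) p = 0 := by
    apply Set.indicator_of_notMem
    simp only [Set.mem_setOf_eq, not_le]
    calc (N:ℝ) < (N:ℝ) + 1 := by linarith
      _ ≤ |p.2| := h
      _ ≤ ‖p‖ := by rw [Prod.norm_def]; exact le_max_of_le_right (by rw [Real.norm_eq_abs])
  rw [hind, Finset.sum_eq_zero, sub_zero]
  intro k _
  exact Dk_zero_eta hδ0 hδ hc hu01 hu0 h _

include hu1 hN in
lemma Gf_good {p : ℝ × ℝ} {m : ℤ} (hm : |(m:ℝ)| ≤ (N:ℝ) - 1)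
    (hp1 : |p.1 - m| ≤ 1/2 - δ) (hp2 : |p.2| ≤ (N:ℝ) - 1) :
    |Gf u N p| ≤ 2 * δ := by
  have hmem : m ∈ Finset.Icc (-(N : ℤ)) (N : ℤ) := by
    simp only [Finset.mem_Icc]
    have h1 : |(m:ℝ)| ≤ (N:ℝ) := by linarith
    rw [abs_le] at h1
    constructor <;> [exact_mod_cast (by push_cast; linarith [h1.1] : -(N:ℝ) ≤ (m:ℝ));
      exact_mod_cast h1.2]
  have hsum : ∑ k ∈ Finset.Icc (-(N : ℤ)) (N : ℤ), Dk u (N:ℝ) (p.1 - k) p.2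
      = Dk u (N:ℝ) (p.1 - m) p.2 := by
    apply Finset.sum_eq_single_of_mem m hmem
    intro k _ hk
    apply Dk_zero_t hδ0 hδ hc hu01 hu0
    have h1 : (1:ℝ) ≤ |(k:ℝ) - m| := by
      have : (1:ℤ) ≤ |k - m| := Int.one_le_abs (by omega)
      calc (1:ℝ) = ((1:ℤ):ℝ) := by norm_num
        _ ≤ ((|k - m| : ℤ) : ℝ) := by exact_mod_cast this
        _ = |(k:ℝ) - m| := by rw [Int.cast_abs]; push_cast; ring_nf
    have h2 : |(k:ℝ) - m| - |p.1 - m| ≤ |p.1 - k| := by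
      have := abs_sub_abs_le_abs_sub ((k:ℝ) - m) (p.1 - m)  -- |k-m| - |p1-m| ≤ |k - p1|
      rw [show (k:ℝ) - m - (p.1 - m) = -(p.1 - k) by ring, abs_neg] at this
      linarith
    linarith
  have hind : Set.indicator {q : ℝ × ℝ | ‖q‖ ≤ (N : ℝ)} (fun _ => (1 : ℝ)) p = 1 := by
    apply Set.indicator_of_mem
    simp only [Set.mem_setOf_eq]
    rw [Prod.norm_def, Real.norm_eq_abs, Real.norm_eq_abs]
    have : |p.1| ≤ (N:ℝ) := by
      have := abs_sub_abs_le_abs_sub p.1 (m:ℝ)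
      have hN1 : (1:ℝ) ≤ (N:ℝ) := by exact_mod_cast hN
      linarith
    exact max_le this (by linarith)
  rw [Gf, hsum, hind, Dk_eq_Iu hδ0 hδ hc hu01 hu0 hp2]
  have hge := Iu_ge hδ0 hδ hc hu01 hu0 hu1 hp1
  have hle := Iu_le hδ0 hδ hc hu01 hu0 (p.1 - (m:ℝ))
  rw [abs_le]; constructor <;> linarith

end Ctx3

section Meas
variable {u : ℝ × ℝ → ℝ}

lemma Dk_sm (hc : Continuous u) (N : ℝ) (k : ℤ) :
    StronglyMeasurable (fun p : ℝ × ℝ => Dk u N (p.1 - k) p.2) := by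
  have heq : (fun p : ℝ × ℝ => Dk u N (p.1 - (k:ℝ)) p.2)
      = fun p : ℝ × ℝ => ∫ σ : ℝ, Set.indicator
          {q : (ℝ × ℝ) × ℝ | q.1.2 - N < q.2 ∧ q.2 ≤ q.1.2 + N}
          (fun q => u (q.1.1 - (k:ℝ), q.2)) (p, σ) := by
    funext p
    rw [Dk, ← integral_indicator measurableSet_Ioc]
    congr 1
  rw [heq]
  apply MeasureTheory.StronglyMeasurable.integral_prod_right'
  apply Measurable.stronglyMeasurable
  apply Measurable.indicator
  · exact hc.measurable.comp
      (((measurable_fst.comp measurable_fst).sub measurable_const).prodMk measurable_snd)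
  · exact MeasurableSet.inter
      (measurableSet_lt ((measurable_snd.comp measurable_fst).sub measurable_const) measurable_snd)
      (measurableSet_le measurable_snd ((measurable_snd.comp measurable_fst).add measurable_const))

lemma Gf_sm (hc : Continuous u) (N : ℕ) : StronglyMeasurable (Gf u N) := by
  apply StronglyMeasurable.sub
  · apply Measurable.stronglyMeasurable
    exact Measurable.indicator measurable_const
      ((isClosed_le continuous_norm continuous_const).measurableSet)
  · exact Finset.stronglyMeasurable_fun_sum _ (fun k _ => Dk_sm hc (N:ℝ) k)
end Meas

section Cov

lemma cov1 (v : ℝ → ℝ) {ε : ℝ} (hε : 0 < ε) (a b : ℝ) :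
    ∫ s in Set.Iic b, v (ε⁻¹ * (s - a)) = ε * ∫ σ in Set.Iic (ε⁻¹ * (b - a)), v σ := by
  rw [← integral_indicator measurableSet_Iic, ← integral_indicator measurableSet_Iic]
  have h1 : (fun s => (Set.Iic b).indicator (fun s' => v (ε⁻¹ * (s' - a))) s)
      = fun s => (Set.Iic (b - a)).indicator (fun s' => v (ε⁻¹ * s')) (s - a) := by
    funext s
    by_cases hs : s ≤ b
    · rw [Set.indicator_of_mem (Set.mem_Iic.mpr hs),
        Set.indicator_of_mem (Set.mem_Iic.mpr (by linarith))]
    · rw [Set.indicator_of_notMem (fun hmem => hs (Set.mem_Iic.mp hmem)),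
        Set.indicator_of_notMem (fun hmem => hs (by have := Set.mem_Iic.mp hmem; linarith))]
  rw [h1, integral_sub_right_eq_self (fun s' => (Set.Iic (b - a)).indicator (fun s'' => v (ε⁻¹ * s'')) s') a]
  have h2 : (fun s : ℝ => (Set.Iic (b - a)).indicator (fun s'' => v (ε⁻¹ * s'')) s)
      = fun s : ℝ => (Set.Iic (ε⁻¹ * (b - a))).indicator v (ε⁻¹ * s) := by
    funext s
    by_cases hs : s ≤ b - a
    · rw [Set.indicator_of_mem (Set.mem_Iic.mpr hs), Set.indicator_of_mem
        (Set.mem_Iic.mpr (mul_le_mul_of_nonneg_left hs (by positivity)))]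
    · rw [Set.indicator_of_notMem (fun hmem => hs (Set.mem_Iic.mp hmem)),
        Set.indicator_of_notMem (fun hmem => hs ?_)]
      exact (mul_le_mul_iff_right₀ (inv_pos.mpr hε)).mp (Set.mem_Iic.mp hmem)
  rw [h2, MeasureTheory.Measure.integral_comp_mul_left
    ((Set.Iic (ε⁻¹ * (b - a))).indicator v) ε⁻¹]
  rw [inv_inv, abs_of_pos hε, smul_eq_mul]

lemma Iic_split (v : ℝ → ℝ) (hint : Integrable v) {a b : ℝ} (hab : a ≤ b) :
    (∫ s in Set.Iic b, v s) - (∫ s in Set.Iic a, v s) = ∫ s in Set.Ioc a b, v s := by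
  have : Set.Iic a ∪ Set.Ioc a b = Set.Iic b := Set.Iic_union_Ioc_eq_Iic hab
  rw [← this, setIntegral_union (Set.Iic_disjoint_Ioc le_rfl) measurableSet_Ioc
    hint.integrableOn hint.integrableOn]
  ring

end Cov

section Struct
variable {u : ℝ × ℝ → ℝ} {δ ε : ℝ}
variable (hδ0 : 0 < δ) (hδ : δ ≤ 1 / 3200) (hε : 0 < ε)
variable (hc : Continuous u) (hu01 : ∀ x, u x ∈ Set.Icc (0 : ℝ) 1)
variable (hu0 : ∀ x : ℝ × ℝ, 1 / 2 + δ ≤ ‖x‖ → u x = 0)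

include hδ0 hδ hε hc hu01 hu0 in
lemma Ez1_eq (z x : ℝ × ℝ) :
    Ez1 u δ ε z x
      = ((2 * (blockN δ : ℝ) * ε)⁻¹ * Gf u (blockN δ) (ε⁻¹ • (x - z))) • e1 := by
  set N : ℕ := blockN δ with hNdef
  have hN0 : (0:ℝ) < (N:ℝ) := by
    have : 1 ≤ N := Nat.le_add_left 1 _
    exact_mod_cast Nat.lt_of_lt_of_le Nat.zero_lt_one this
  set τ : ℝ := ε⁻¹ * (x.1 - z.1) with hτ
  set η : ℝ := ε⁻¹ * (x.2 - z.2) with hη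
  have hp1 : (ε⁻¹ • (x - z)).1 = τ := rfl
  have hp2 : (ε⁻¹ • (x - z)).2 = η := rfl
  have hα : ∀ k : ℤ,
      alpha1 u ε (z + ((k : ℝ) * ε) • e1 - ((N : ℝ) * ε) • e2) x -
        alpha1 u ε (z + ((k : ℝ) * ε) • e1 + ((N : ℝ) * ε) • e2) x
      = (ε * Dk u (N:ℝ) (τ - k) η) • e1 := by
    intro k
    rw [alpha1, alpha1, ← sub_smul]
    congr 1
    have hw1 : z + ((k : ℝ) * ε) • e1 - ((N : ℝ) * ε) • e2
        = (z.1 + (k:ℝ) * ε, z.2 - (N:ℝ) * ε) := by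
      simp [e1, e2, Prod.ext_iff]
    have hw2 : z + ((k : ℝ) * ε) • e1 + ((N : ℝ) * ε) • e2
        = (z.1 + (k:ℝ) * ε, z.2 + (N:ℝ) * ε) := by
      simp [e1, e2, Prod.ext_iff]
    rw [hw1, hw2]
    have hbeta : ∀ (a : ℝ) (s : ℝ),
        betaZ u ε (z.1 + (k:ℝ) * ε, a) (x.1, s)
          = (fun σ => u (τ - k, σ)) (ε⁻¹ * (s - a)) := by
      intro a s
      rw [betaZ]
      congr 1
      have : ε⁻¹ * (x.1 - (z.1 + (k:ℝ) * ε)) = τ - k := by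
        rw [hτ]; field_simp; ring
      simp only [Prod.smul_def, Prod.fst_sub, Prod.snd_sub, smul_eq_mul]
      rw [← this]
    simp only [hbeta]
    rw [cov1 (fun σ => u (τ - (k:ℝ), σ)) hε (z.2 - (N:ℝ)*ε) x.2,
      cov1 (fun σ => u (τ - (k:ℝ), σ)) hε (z.2 + (N:ℝ)*ε) x.2]
    rw [← mul_sub]
    congr 1
    have e1' : ε⁻¹ * (x.2 - (z.2 - (N:ℝ) * ε)) = η + N := by rw [hη]; field_simp; ring
    have e2' : ε⁻¹ * (x.2 - (z.2 + (N:ℝ) * ε)) = η - N := by rw [hη]; field_simp; ring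
    rw [e1', e2', Dk]
    exact Iic_split _ (u_int hδ0 hδ hc hu01 hu0 _) (by linarith)
  have hMz : Mz1 N ε z x
      = ((2 * (N:ℝ) * ε)⁻¹ *
          Set.indicator {q : ℝ × ℝ | ‖q‖ ≤ (N : ℝ)} (fun _ => (1:ℝ)) (ε⁻¹ • (x - z))) • e1 := by
    rw [Mz1]
    congr 2
    have hiff : x ∈ Qz N ε z ↔ (ε⁻¹ • (x - z)) ∈ {q : ℝ × ℝ | ‖q‖ ≤ (N : ℝ)} := by
      simp only [Qz, Set.mem_setOf_eq, norm_smul, Real.norm_eq_abs,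
        abs_of_pos (inv_pos.mpr hε)]
      rw [inv_mul_le_iff₀ hε, mul_comm ((N:ℝ)) ε]
    by_cases hx : x ∈ Qz N ε z
    · rw [Set.indicator_of_mem hx, Set.indicator_of_mem (hiff.mp hx)]
    · rw [Set.indicator_of_notMem hx, Set.indicator_of_notMem (fun h => hx (hiff.mpr h))]
  rw [Ez1, ← hNdef, hMz]
  have hsum : ∑ k ∈ Finset.Icc (-(N : ℤ)) (N : ℤ),
      (alpha1 u ε (z + ((k : ℝ) * ε) • e1 - ((N : ℝ) * ε) • e2) x -
        alpha1 u ε (z + ((k : ℝ) * ε) • e1 + ((N : ℝ) * ε) • e2) x)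
      = (∑ k ∈ Finset.Icc (-(N : ℤ)) (N : ℤ), ε * Dk u (N:ℝ) (τ - k) η) • e1 := by
    rw [Finset.sum_smul]
    exact Finset.sum_congr rfl (fun k _ => hα k)
  rw [hsum, smul_smul, ← sub_smul]
  congr 1
  rw [← Finset.mul_sum, Gf, hp1, hp2]
  field_simp
end Struct



section Integration
variable {u : ℝ × ℝ → ℝ} {δ : ℝ} {N : ℕ}
variable (hδ0 : 0 < δ) (hδ : δ ≤ 1 / 3200)
variable (hc : Continuous u) (hu01 : ∀ x, u x ∈ Set.Icc (0 : ℝ) 1)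
variable (hu0 : ∀ x : ℝ × ℝ, 1 / 2 + δ ≤ ‖x‖ → u x = 0)
variable (hu1 : ∀ x : ℝ × ℝ, ‖x‖ ≤ 1 / 2 - δ → u x = 1)
variable (hN : 1 ≤ N)

lemma ind_int (a b : ℝ) : Integrable (Set.indicator (Set.Icc a b) (fun _ => (1:ℝ))) := by
  rw [integrable_indicator_iff measurableSet_Icc]
  exact integrableOn_const (by simp [Real.volume_Icc])

lemma ind_integral (a b : ℝ) (h : a ≤ b) :
    ∫ t, Set.indicator (Set.Icc a b) (fun _ => (1:ℝ)) t = b - a := by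
  rw [integral_indicator_const _ measurableSet_Icc]
  simp [Real.volume_Icc, ENNReal.toReal_ofReal (by linarith : (0:ℝ) ≤ b - a)]
  exact h

lemma ind_integral_mul (c a b : ℝ) (h : a ≤ b) :
    ∫ t, c * Set.indicator (Set.Icc a b) (fun _ => (1:ℝ)) t = c * (b - a) := by
  simp_rw [← smul_eq_mul]
  rw [integral_smul, ind_integral a b h, smul_eq_mul]

lemma ind_nonneg (a b t : ℝ) : 0 ≤ Set.indicator (Set.Icc a b) (fun _ => (1:ℝ)) t :=
  Set.indicator_nonneg (fun _ _ => zero_le_one) t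

lemma ind_one {a b t : ℝ} (h1 : a ≤ t) (h2 : t ≤ b) :
    Set.indicator (Set.Icc a b) (fun _ => (1:ℝ)) t = 1 :=
  Set.indicator_of_mem (Set.mem_Icc.mpr ⟨h1, h2⟩) _

include hδ0 hδ hc hu01 hu0 hN

lemma Gf_sq_le (p : ℝ × ℝ) : Gf u N p ^ 2 ≤ 16 := by
  have h := Gf_abs_le hδ0 hδ hc hu01 hu0 hN p
  rw [abs_le] at h
  nlinarith [h.1, h.2]

lemma Jint (τ : ℝ) : Integrable (fun η => Gf u N (τ, η) ^ 2) := by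
  have hsm : StronglyMeasurable (fun η => Gf u N (τ, η)) :=
    (Gf_sm hc N).comp_measurable (measurable_const.prodMk measurable_id)
  apply Integrable.mono'
    (g := fun η => 16 * Set.indicator (Set.Icc (-((N:ℝ)+1)) ((N:ℝ)+1)) (fun _ => (1:ℝ)) η)
  · exact (ind_int _ _).const_mul 16
  · have : (fun η => Gf u N (τ, η) ^ 2) = fun η => Gf u N (τ, η) * Gf u N (τ, η) := by
      funext η; ring
    rw [this]
    exact (hsm.mul hsm).aestronglyMeasurable
  · refine Filter.Eventually.of_forall (fun η => ?_)
    rw [Real.norm_eq_abs, abs_of_nonneg (sq_nonneg _)]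
    by_cases hη : |η| ≤ (N:ℝ) + 1
    · rw [abs_le] at hη
      rw [ind_one hη.1 hη.2, mul_one]
      exact Gf_sq_le hδ0 hδ hc hu01 hu0 hN _
    · push_neg at hη
      have : Gf u N (τ, η) = 0 := Gf_zero2 hδ0 hδ hc hu01 hu0 (p := (τ, η)) hη.le
      rw [this]
      have := ind_nonneg (-((N:ℝ)+1)) ((N:ℝ)+1) η
      nlinarith

lemma J_le_bad (τ : ℝ) : ∫ η, Gf u N (τ, η) ^ 2 ≤ 16 * (2 * (N:ℝ) + 2) := by
  have hb : ∀ η, Gf u N (τ, η) ^ 2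
      ≤ 16 * Set.indicator (Set.Icc (-((N:ℝ)+1)) ((N:ℝ)+1)) (fun _ => (1:ℝ)) η := by
    intro η
    by_cases hη : |η| ≤ (N:ℝ) + 1
    · rw [abs_le] at hη
      rw [ind_one hη.1 hη.2, mul_one]
      exact Gf_sq_le hδ0 hδ hc hu01 hu0 hN _
    · push_neg at hη
      have : Gf u N (τ, η) = 0 := Gf_zero2 hδ0 hδ hc hu01 hu0 (p := (τ, η)) hη.le
      rw [this]
      have := ind_nonneg (-((N:ℝ)+1)) ((N:ℝ)+1) η
      nlinarith
  calc ∫ η, Gf u N (τ, η) ^ 2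
      ≤ ∫ η, 16 * Set.indicator (Set.Icc (-((N:ℝ)+1)) ((N:ℝ)+1)) (fun _ => (1:ℝ)) η :=
        integral_mono (Jint hδ0 hδ hc hu01 hu0 hN τ) ((ind_int _ _).const_mul 16) hb
    _ = 16 * (2 * (N:ℝ) + 2) := by
        rw [ind_integral_mul _ _ _ (by linarith [(by exact_mod_cast hN : (1:ℝ) ≤ (N:ℝ))])]
        ring

include hu1 in
lemma J_le_good {τ : ℝ} {m : ℤ} (hm : |(m:ℝ)| ≤ (N:ℝ) - 1) (hτm : |τ - m| ≤ 1/2 - δ) :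
    ∫ η, Gf u N (τ, η) ^ 2 ≤ 8 * (N:ℝ) * δ^2 + 65 := by
  set ψ : ℝ → ℝ := fun η =>
    4*δ^2 * Set.indicator (Set.Icc (-((N:ℝ)+1)) ((N:ℝ)+1)) (fun _ => (1:ℝ)) η
    + 16 * Set.indicator (Set.Icc ((N:ℝ)-1) ((N:ℝ)+1)) (fun _ => (1:ℝ)) η
    + 16 * Set.indicator (Set.Icc (-((N:ℝ)+1)) (-((N:ℝ)-1))) (fun _ => (1:ℝ)) η with hψ
  have hψint : Integrable ψ :=
    (((ind_int _ _).const_mul _).add ((ind_int _ _).const_mul _)).add ((ind_int _ _).const_mul _)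
  have hb : ∀ η, Gf u N (τ, η) ^ 2 ≤ ψ η := by
    intro η
    have t1 : 0 ≤ 4*δ^2 * Set.indicator (Set.Icc (-((N:ℝ)+1)) ((N:ℝ)+1)) (fun _ => (1:ℝ)) η := by
      have := ind_nonneg (-((N:ℝ)+1)) ((N:ℝ)+1) η; nlinarith
    have t2 : 0 ≤ 16 * Set.indicator (Set.Icc ((N:ℝ)-1) ((N:ℝ)+1)) (fun _ => (1:ℝ)) η := by
      have := ind_nonneg ((N:ℝ)-1) ((N:ℝ)+1) η; nlinarith
    have t3 : 0 ≤ 16 * Set.indicator (Set.Icc (-((N:ℝ)+1)) (-((N:ℝ)-1))) (fun _ => (1:ℝ)) η := by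
      have := ind_nonneg (-((N:ℝ)+1)) (-((N:ℝ)-1)) η; nlinarith
    simp only [hψ]
    by_cases h1 : |η| ≤ (N:ℝ) - 1
    · have hg := Gf_good hδ0 hδ hc hu01 hu0 hu1 hN hm (p := (τ, η)) hτm h1
      rw [abs_le] at hg
      have h1' := abs_le.mp h1
      have hN1 : (1:ℝ) ≤ (N:ℝ) := (by exact_mod_cast hN : (1:ℝ) ≤ (N:ℝ))
      rw [ind_one (by linarith [h1'.1]) (by linarith [h1'.2]), mul_one]
      nlinarith [hg.1, hg.2]
    · by_cases h2 : |η| ≤ (N:ℝ) + 1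
      · push_neg at h1
        have hsq := Gf_sq_le hδ0 hδ hc hu01 hu0 hN (τ, η)
        rcases le_or_gt 0 η with hsgn | hsgn
        · have : (N:ℝ) - 1 < η := by rwa [abs_of_nonneg hsgn] at h1
          rw [ind_one this.le (by rw [abs_le] at h2; exact h2.2), mul_one]
          nlinarith
        · have : (N:ℝ) - 1 < -η := by rwa [abs_of_neg hsgn] at h1
          rw [ind_one (a := -((N:ℝ)+1)) (b := -((N:ℝ)-1)) (by rw [abs_le] at h2; linarith [h2.1])
            (by linarith), mul_one]
          nlinarith
      · push_neg at h2
        have : Gf u N (τ, η) = 0 := Gf_zero2 hδ0 hδ hc hu01 hu0 (p := (τ, η)) h2.le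
        rw [this]
        nlinarith
  calc ∫ η, Gf u N (τ, η) ^ 2 ≤ ∫ η, ψ η :=
        integral_mono (Jint hδ0 hδ hc hu01 hu0 hN τ) hψint hb
    _ ≤ 8 * (N:ℝ) * δ^2 + 65 := by
        have hN1 : (1:ℝ) ≤ (N:ℝ) := (by exact_mod_cast hN : (1:ℝ) ≤ (N:ℝ))
        simp only [hψ]
        have i1 : Integrable (fun η =>
            4*δ^2 * Set.indicator (Set.Icc (-((N:ℝ)+1)) ((N:ℝ)+1)) (fun _ => (1:ℝ)) η) :=
          (ind_int _ _).const_mul _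
        have i2 : Integrable (fun η =>
            16 * Set.indicator (Set.Icc ((N:ℝ)-1) ((N:ℝ)+1)) (fun _ => (1:ℝ)) η) :=
          (ind_int _ _).const_mul _
        have i3 : Integrable (fun η =>
            16 * Set.indicator (Set.Icc (-((N:ℝ)+1)) (-((N:ℝ)-1))) (fun _ => (1:ℝ)) η) :=
          (ind_int _ _).const_mul _
        have i12 : Integrable (fun η =>
            4*δ^2 * Set.indicator (Set.Icc (-((N:ℝ)+1)) ((N:ℝ)+1)) (fun _ => (1:ℝ)) η
            + 16 * Set.indicator (Set.Icc ((N:ℝ)-1) ((N:ℝ)+1)) (fun _ => (1:ℝ)) η) := i1.add i2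
        rw [integral_add i12 i3, integral_add i1 i2,
          ind_integral_mul _ _ _ (by linarith), ind_integral_mul _ _ _ (by linarith),
          ind_integral_mul _ _ _ (by linarith)]
        nlinarith

end Integration


section Outer
variable {u : ℝ × ℝ → ℝ} {δ : ℝ} {N : ℕ}
variable (hδ0 : 0 < δ) (hδ : δ ≤ 1 / 3200)
variable (hc : Continuous u) (hu01 : ∀ x, u x ∈ Set.Icc (0 : ℝ) 1)
variable (hu0 : ∀ x : ℝ × ℝ, 1 / 2 + δ ≤ ‖x‖ → u x = 0)
variable (hu1 : ∀ x : ℝ × ℝ, ‖x‖ ≤ 1 / 2 - δ → u x = 1)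
variable (hN : 1 ≤ N)

include hδ0 in
lemma bad_classify {τ : ℝ} (h : |τ| ≤ (N:ℝ)+1)
    (hng : ¬ ∃ m : ℤ, |(m:ℝ)| ≤ (N:ℝ)-1 ∧ |τ - m| ≤ 1/2 - δ) :
    ((N:ℝ)-2 ≤ τ ∧ τ ≤ (N:ℝ)+1) ∨ (-((N:ℝ)+1) ≤ τ ∧ τ ≤ -((N:ℝ)-2)) ∨
      ∃ j ∈ Finset.Icc (-(N:ℤ)-2) ((N:ℤ)+1),
        ((j:ℝ)+1/2-δ ≤ τ ∧ τ ≤ (j:ℝ)+1/2+δ) := by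
  have habs := abs_le.mp h
  by_cases hedge : |τ| ≤ (N:ℝ)-2
  · right; right
    set m : ℤ := round τ with hmdef
    have hr := abs_sub_round τ
    have hedge' := abs_le.mp hedge
    have hr' := abs_le.mp hr
    have hm : |(m:ℝ)| ≤ (N:ℝ)-1 := by
      rw [abs_le]; constructor <;> linarith
    have hbad : 1/2 - δ < |τ - m| := by
      by_contra hcon
      push_neg at hcon
      exact hng ⟨m, hm, hcon⟩
    have hm' := abs_le.mp hm
    rcases le_or_gt (m:ℝ) τ with hcase | hcase
    · have hb2 : 1/2 - δ < τ - m := by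
        rwa [abs_of_nonneg (by linarith)] at hbad
      refine ⟨m, ?_, by linarith, by linarith⟩
      refine Finset.mem_Icc.mpr ⟨?_, ?_⟩
      · exact_mod_cast (by push_cast; linarith : ((-(N:ℤ)-2 : ℤ):ℝ) ≤ (m:ℝ))
      · exact_mod_cast (by push_cast; linarith : ((m : ℤ):ℝ) ≤ (((N:ℤ)+1 : ℤ):ℝ))
    · have hb2 : 1/2 - δ < (m:ℝ) - τ := by
        rw [abs_of_neg (by linarith : τ - (m:ℝ) < 0)] at hbad
        linarith
      refine ⟨m - 1, ?_, by push_cast; linarith, by push_cast; linarith⟩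
      refine Finset.mem_Icc.mpr ⟨?_, ?_⟩
      · exact_mod_cast (by push_cast; linarith : ((-(N:ℤ)-2 : ℤ):ℝ) ≤ ((m - 1 : ℤ):ℝ))
      · exact_mod_cast (by push_cast; linarith : ((m - 1 : ℤ):ℝ) ≤ (((N:ℤ)+1 : ℤ):ℝ))
  · push_neg at hedge
    rcases le_or_gt 0 τ with hsgn | hsgn
    · left
      rw [abs_of_nonneg hsgn] at hedge
      exact ⟨by linarith, habs.2⟩
    · right; left
      rw [abs_of_neg hsgn] at hedge
      exact ⟨habs.1, by linarith⟩

include hδ0 hδ hc hu01 hu0 hN in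
lemma Gsq_int : Integrable (fun p : ℝ × ℝ => Gf u N p ^ 2) := by
  apply Integrable.mono'
    (g := fun p => 16 * Set.indicator (Metric.closedBall (0:ℝ×ℝ) ((N:ℝ)+1)) (fun _ => (1:ℝ)) p)
  · refine Integrable.const_mul ?_ _
    rw [integrable_indicator_iff measurableSet_closedBall]
    exact integrableOn_const ((isCompact_closedBall _ _).measure_lt_top).ne
  · have hsm := Gf_sm hc N
    have : (fun p : ℝ × ℝ => Gf u N p ^ 2) = fun p => Gf u N p * Gf u N p := by
      funext p; ring
    rw [this]
    exact (hsm.mul hsm).aestronglyMeasurable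
  · refine Filter.Eventually.of_forall (fun p => ?_)
    rw [Real.norm_eq_abs, abs_of_nonneg (sq_nonneg _)]
    by_cases hp : ‖p‖ ≤ (N:ℝ)+1
    · rw [Set.indicator_of_mem (mem_closedBall_zero_iff.mpr hp), mul_one]
      exact Gf_sq_le hδ0 hδ hc hu01 hu0 hN p
    · push_neg at hp
      have hp' : (N:ℝ)+1 ≤ max |p.1| |p.2| := by
        rw [Prod.norm_def, Real.norm_eq_abs, Real.norm_eq_abs] at hp
        exact hp.le
      have hnn : (0:ℝ) ≤ Set.indicator (Metric.closedBall (0:ℝ×ℝ) ((N:ℝ)+1)) (fun _ => (1:ℝ)) p :=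
        Set.indicator_nonneg (fun _ _ => zero_le_one) p
      rcases le_max_iff.mp hp' with h1 | h1
      · rw [Gf_zero1 hδ0 hδ hc hu01 hu0 h1]; nlinarith
      · rw [Gf_zero2 hδ0 hδ hc hu01 hu0 h1]; nlinarith

include hδ0 hδ hc hu01 hu0 hu1 hN in
lemma Gsq_total :
    ∫ p : ℝ × ℝ, Gf u N p ^ 2
      ≤ (8*(N:ℝ)*δ^2+65)*(2*(N:ℝ)+2) + (16*(2*(N:ℝ)+2))*(6+(4*(N:ℝ)+8)*δ) := by
  have hN1 : (1:ℝ) ≤ (N:ℝ) := by exact_mod_cast hN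
  set φ : ℝ → ℝ := fun τ =>
    (8*(N:ℝ)*δ^2+65) * Set.indicator (Set.Icc (-((N:ℝ)+1)) ((N:ℝ)+1)) (fun _ => (1:ℝ)) τ
    + ((16*(2*(N:ℝ)+2)) * Set.indicator (Set.Icc ((N:ℝ)-2) ((N:ℝ)+1)) (fun _ => (1:ℝ)) τ
      + (16*(2*(N:ℝ)+2)) * Set.indicator (Set.Icc (-((N:ℝ)+1)) (-((N:ℝ)-2))) (fun _ => (1:ℝ)) τ
      + ∑ j ∈ Finset.Icc (-(N:ℤ)-2) ((N:ℤ)+1),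
          (16*(2*(N:ℝ)+2)) * Set.indicator (Set.Icc ((j:ℝ)+1/2-δ) ((j:ℝ)+1/2+δ))
            (fun _ => (1:ℝ)) τ) with hφ
  have i0 : Integrable (fun τ =>
      (8*(N:ℝ)*δ^2+65) * Set.indicator (Set.Icc (-((N:ℝ)+1)) ((N:ℝ)+1)) (fun _ => (1:ℝ)) τ) :=
    (ind_int _ _).const_mul _
  have ip : Integrable (fun τ =>
      (16*(2*(N:ℝ)+2)) * Set.indicator (Set.Icc ((N:ℝ)-2) ((N:ℝ)+1)) (fun _ => (1:ℝ)) τ) :=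
    (ind_int _ _).const_mul _
  have im : Integrable (fun τ =>
      (16*(2*(N:ℝ)+2)) * Set.indicator (Set.Icc (-((N:ℝ)+1)) (-((N:ℝ)-2))) (fun _ => (1:ℝ)) τ) :=
    (ind_int _ _).const_mul _
  have isum : Integrable (fun τ => ∑ j ∈ Finset.Icc (-(N:ℤ)-2) ((N:ℤ)+1),
      (16*(2*(N:ℝ)+2)) * Set.indicator (Set.Icc ((j:ℝ)+1/2-δ) ((j:ℝ)+1/2+δ))
        (fun _ => (1:ℝ)) τ) :=
    integrable_finset_sum _ (fun j _ => (ind_int _ _).const_mul _)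
  have ipm : Integrable (fun τ =>
      (16*(2*(N:ℝ)+2)) * Set.indicator (Set.Icc ((N:ℝ)-2) ((N:ℝ)+1)) (fun _ => (1:ℝ)) τ
      + (16*(2*(N:ℝ)+2)) * Set.indicator (Set.Icc (-((N:ℝ)+1)) (-((N:ℝ)-2)))
          (fun _ => (1:ℝ)) τ) := ip.add im
  have ipms : Integrable (fun τ =>
      ((16*(2*(N:ℝ)+2)) * Set.indicator (Set.Icc ((N:ℝ)-2) ((N:ℝ)+1)) (fun _ => (1:ℝ)) τ
      + (16*(2*(N:ℝ)+2)) * Set.indicator (Set.Icc (-((N:ℝ)+1)) (-((N:ℝ)-2)))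
          (fun _ => (1:ℝ)) τ)
      + ∑ j ∈ Finset.Icc (-(N:ℤ)-2) ((N:ℤ)+1),
          (16*(2*(N:ℝ)+2)) * Set.indicator (Set.Icc ((j:ℝ)+1/2-δ) ((j:ℝ)+1/2+δ))
            (fun _ => (1:ℝ)) τ) := ipm.add isum
  have hφint : Integrable φ := by
    rw [hφ]
    exact i0.add ipms
  have key : ∀ τ : ℝ, (∫ η, Gf u N (τ, η) ^ 2) ≤ φ τ := by
    intro τ
    have hc2pos : (0:ℝ) < 16*(2*(N:ℝ)+2) := by positivity
    have t0 : 0 ≤ (8*(N:ℝ)*δ^2+65) *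
        Set.indicator (Set.Icc (-((N:ℝ)+1)) ((N:ℝ)+1)) (fun _ => (1:ℝ)) τ :=
      mul_nonneg (by positivity) (ind_nonneg _ _ _)
    have tp : 0 ≤ (16*(2*(N:ℝ)+2)) *
        Set.indicator (Set.Icc ((N:ℝ)-2) ((N:ℝ)+1)) (fun _ => (1:ℝ)) τ :=
      mul_nonneg hc2pos.le (ind_nonneg _ _ _)
    have tm : 0 ≤ (16*(2*(N:ℝ)+2)) *
        Set.indicator (Set.Icc (-((N:ℝ)+1)) (-((N:ℝ)-2))) (fun _ => (1:ℝ)) τ :=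
      mul_nonneg hc2pos.le (ind_nonneg _ _ _)
    have ts : 0 ≤ ∑ j ∈ Finset.Icc (-(N:ℤ)-2) ((N:ℤ)+1),
        (16*(2*(N:ℝ)+2)) * Set.indicator (Set.Icc ((j:ℝ)+1/2-δ) ((j:ℝ)+1/2+δ))
          (fun _ => (1:ℝ)) τ :=
      Finset.sum_nonneg (fun j _ => mul_nonneg hc2pos.le (ind_nonneg _ _ _))
    simp only [hφ]
    by_cases hτ : |τ| ≤ (N:ℝ)+1
    · by_cases hgood : ∃ m : ℤ, |(m:ℝ)| ≤ (N:ℝ)-1 ∧ |τ - m| ≤ 1/2 - δ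
      · obtain ⟨m, hm, hτm⟩ := hgood
        have hJ := J_le_good hδ0 hδ hc hu01 hu0 hu1 hN hm hτm
        have hτ' := abs_le.mp hτ
        rw [ind_one hτ'.1 hτ'.2, mul_one]
        linarith
      · have hJ := J_le_bad hδ0 hδ hc hu01 hu0 hN τ
        rcases bad_classify hδ0 hτ hgood with ⟨l1, l2⟩ | ⟨l1, l2⟩ | ⟨j, hj, l1, l2⟩
        · rw [ind_one (a := (N:ℝ)-2) l1 l2, mul_one]
          linarith
        · rw [ind_one (a := -((N:ℝ)+1)) (b := -((N:ℝ)-2)) l1 l2, mul_one]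
          linarith
        · have hsle : (16*(2*(N:ℝ)+2)) ≤ ∑ j ∈ Finset.Icc (-(N:ℤ)-2) ((N:ℤ)+1),
              (16*(2*(N:ℝ)+2)) * Set.indicator (Set.Icc ((j:ℝ)+1/2-δ) ((j:ℝ)+1/2+δ))
                (fun _ => (1:ℝ)) τ := by
            have hone : (16*(2*(N:ℝ)+2)) * Set.indicator (Set.Icc ((j:ℝ)+1/2-δ) ((j:ℝ)+1/2+δ))
                (fun _ => (1:ℝ)) τ = (16*(2*(N:ℝ)+2)) := by
              rw [ind_one l1 l2, mul_one]
            refine le_trans (le_of_eq hone.symm) (Finset.single_le_sum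
              (f := fun j : ℤ => (16*(2*(N:ℝ)+2)) * Set.indicator
                (Set.Icc ((j:ℝ)+1/2-δ) ((j:ℝ)+1/2+δ)) (fun _ => (1:ℝ)) τ)
              (fun j _ => mul_nonneg hc2pos.le (ind_nonneg _ _ _)) hj)
          linarith
    · push_neg at hτ
      have hzero : ∀ η : ℝ, Gf u N (τ, η) ^ 2 = 0 := by
        intro η
        rw [Gf_zero1 hδ0 hδ hc hu01 hu0 (p := (τ, η)) hτ.le]
        ring
      simp only [hzero, integral_zero]
      linarith
  have fub : ∫ p : ℝ × ℝ, Gf u N p ^ 2 = ∫ τ : ℝ, ∫ η : ℝ, Gf u N (τ, η) ^ 2 := by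
    rw [Measure.volume_eq_prod]
    exact integral_prod _ (by rw [← Measure.volume_eq_prod]; exact Gsq_int hδ0 hδ hc hu01 hu0 hN)
  rw [fub]
  have step : ∫ τ : ℝ, (∫ η : ℝ, Gf u N (τ, η) ^ 2) ≤ ∫ τ, φ τ :=
    integral_mono_of_nonneg
      (Filter.Eventually.of_forall (fun τ => integral_nonneg (fun η => sq_nonneg _)))
      hφint (Filter.Eventually.of_forall key)
  refine le_trans step ?_
  have hval : ∫ τ, φ τ = (8*(N:ℝ)*δ^2+65) * (2*(N:ℝ)+2)
      + ((16*(2*(N:ℝ)+2)) * 3 + (16*(2*(N:ℝ)+2)) * 3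
        + (2*(N:ℝ)+4) * ((16*(2*(N:ℝ)+2)) * (2*δ))) := by
    simp only [hφ]
    rw [integral_add i0 ipms, integral_add ipm isum, integral_add ip im,
      integral_finset_sum _ (fun j _ => (ind_int _ _).const_mul _)]
    have hband : ∀ j ∈ Finset.Icc (-(N:ℤ)-2) ((N:ℤ)+1),
        (∫ τ, (16*(2*(N:ℝ)+2)) * Set.indicator (Set.Icc ((j:ℝ)+1/2-δ) ((j:ℝ)+1/2+δ))
          (fun _ => (1:ℝ)) τ) = (16*(2*(N:ℝ)+2)) * (2*δ) := by
      intro j _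
      rw [ind_integral_mul _ _ _ (by linarith)]
      ring_nf
    rw [Finset.sum_congr rfl hband, Finset.sum_const, nsmul_eq_mul]
    have hcardn : (Finset.Icc (-(N:ℤ)-2) ((N:ℤ)+1)).card = 2*N+4 := by
      rw [Int.card_Icc]
      omega
    have hcard : ((Finset.Icc (-(N:ℤ)-2) ((N:ℤ)+1)).card : ℝ) = 2*(N:ℝ)+4 := by
      rw [hcardn]
      push_cast
      ring
    rw [hcard, ind_integral_mul _ _ _ (by linarith), ind_integral_mul _ _ _ (by linarith),
      ind_integral_mul _ _ _ (by linarith)]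
    ring
  rw [hval]
  nlinarith [hδ0.le, hN1]

end Outer

/-- Support and `L²` bound on the block-averaging errors for the plateau profile: if
`0 < δ ≤ 1/3200`, `ε > 0`, and `u ∈ C¹(ℝ², [0,1])` equals `0` for `|x|_∞ ≥ 1/2 + δ` and `1`
for `|x|_∞ ≤ 1/2 - δ`, then `𝓔_z^{(1)}` vanishes outside `Q_z'` and `∫ |𝓔_z^{(1)}|² ≤ 100 δ`. -/
theorem stmt4 (δ ε : ℝ) (hδ0 : 0 < δ) (hδ : δ ≤ 1 / 3200) (hε : 0 < ε)
    (u : ℝ × ℝ → ℝ) (hu : ContDiff ℝ 1 u) (hu01 : ∀ x, u x ∈ Set.Icc (0 : ℝ) 1)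
    (hu0 : ∀ x : ℝ × ℝ, 1 / 2 + δ ≤ ‖x‖ → u x = 0)
    (hu1 : ∀ x : ℝ × ℝ, ‖x‖ ≤ 1 / 2 - δ → u x = 1)
    (z : ℝ × ℝ) :
    (∀ x : ℝ × ℝ, x ∉ Qz' (blockN δ) δ ε z → Ez1 u δ ε z x = 0) ∧
    (∫ x : ℝ × ℝ, ‖Ez1 u δ ε z x‖ ^ 2) ≤ 100 * δ := by
  have hc : Continuous u := hu.continuous
  set N : ℕ := blockN δ with hNdef
  have hN : 1 ≤ N := Nat.le_add_left 1 _
  have hN1 : (1:ℝ) ≤ (N:ℝ) := by exact_mod_cast hN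
  have hNd : (δ^2)⁻¹ < (N:ℝ) := by
    rw [hNdef, blockN]
    push_cast
    exact Nat.lt_floor_add_one _
  have hδinv : (3200:ℝ) ≤ δ⁻¹ := by
    rw [show (3200:ℝ) = (1/3200)⁻¹ by norm_num]
    exact inv_anti₀ hδ0 hδ
  constructor
  · intro x hx
    rw [Ez1_eq hδ0 hδ hε hc hu01 hu0 z x]
    have hx' : ((N:ℝ) + δ⁻¹) * ε < ‖x - z‖ := by
      by_contra hcon
      push_neg at hcon
      exact hx hcon
    have hp : (N:ℝ) + 1 ≤ ‖ε⁻¹ • (x - z)‖ := by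
      rw [norm_smul, Real.norm_eq_abs, abs_of_pos (inv_pos.mpr hε)]
      calc (N:ℝ) + 1 ≤ (N:ℝ) + δ⁻¹ := by linarith
        _ = ε⁻¹ * (((N:ℝ) + δ⁻¹) * ε) := by field_simp
        _ ≤ ε⁻¹ * ‖x - z‖ :=
            mul_le_mul_of_nonneg_left hx'.le (by positivity)
    have hG : Gf u N (ε⁻¹ • (x - z)) = 0 := by
      rw [Prod.norm_def, Real.norm_eq_abs, Real.norm_eq_abs] at hp
      rcases le_max_iff.mp hp with h1 | h1
      · exact Gf_zero1 hδ0 hδ hc hu01 hu0 h1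
      · exact Gf_zero2 hδ0 hδ hc hu01 hu0 h1
    rw [hG, mul_zero, zero_smul]
  · have hfr : Module.finrank ℝ (ℝ × ℝ) = 2 := by
      simp [Module.finrank_prod]
    have hnorm : ∀ x : ℝ × ℝ, ‖Ez1 u δ ε z x‖ ^ 2
        = ((2*(N:ℝ)*ε)⁻¹)^2 * Gf u N (ε⁻¹ • (x - z)) ^ 2 := by
      intro x
      rw [Ez1_eq hδ0 hδ hε hc hu01 hu0 z x, norm_smul_e1, abs_mul, mul_pow, sq_abs, sq_abs]
    have hB := Gsq_total hδ0 hδ hc hu01 hu0 hu1 hN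
    have hNpos : (0:ℝ) < (N:ℝ) := by linarith
    have hchain : ∫ x : ℝ × ℝ, ‖Ez1 u δ ε z x‖ ^ 2
        = ((2*(N:ℝ)*ε)⁻¹)^2 * (ε ^ 2 * ∫ p : ℝ × ℝ, Gf u N p ^ 2) := by
      calc ∫ x : ℝ × ℝ, ‖Ez1 u δ ε z x‖ ^ 2
          = ∫ x : ℝ × ℝ, ((2*(N:ℝ)*ε)⁻¹)^2 * Gf u N (ε⁻¹ • (x - z)) ^ 2 := by
            exact integral_congr_ae (Filter.Eventually.of_forall hnorm)
        _ = ((2*(N:ℝ)*ε)⁻¹)^2 * ∫ x : ℝ × ℝ, Gf u N (ε⁻¹ • (x - z)) ^ 2 := by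
            simp_rw [← smul_eq_mul]
            exact integral_smul _ _
        _ = ((2*(N:ℝ)*ε)⁻¹)^2 * ∫ y : ℝ × ℝ, Gf u N (ε⁻¹ • y) ^ 2 := by
            congr 1
            exact integral_sub_right_eq_self (fun y : ℝ × ℝ => Gf u N (ε⁻¹ • y) ^ 2) z
        _ = ((2*(N:ℝ)*ε)⁻¹)^2 * (ε ^ 2 * ∫ p : ℝ × ℝ, Gf u N p ^ 2) := by
            congr 1
            have h2 := Measure.integral_comp_inv_smul_of_nonneg volume
              (fun p : ℝ × ℝ => Gf u N p ^ 2) hε.le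
            rw [hfr] at h2
            simpa using h2
    rw [hchain]
    have hGnn : 0 ≤ ∫ p : ℝ × ℝ, Gf u N p ^ 2 := integral_nonneg (fun p => sq_nonneg _)
    have hccnn : (0:ℝ) ≤ ((2*(N:ℝ)*ε)⁻¹)^2 * ε^2 := by positivity
    have hstep : ((2*(N:ℝ)*ε)⁻¹)^2 * (ε ^ 2 * ∫ p : ℝ × ℝ, Gf u N p ^ 2)
        ≤ ((2*(N:ℝ)*ε)⁻¹)^2 * (ε ^ 2 *
          ((8*(N:ℝ)*δ^2+65)*(2*(N:ℝ)+2) + (16*(2*(N:ℝ)+2))*(6+(4*(N:ℝ)+8)*δ))) := by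
      apply mul_le_mul_of_nonneg_left _ (by positivity)
      exact mul_le_mul_of_nonneg_left hB (by positivity)
    refine le_trans hstep ?_
    have hrw : ((2*(N:ℝ)*ε)⁻¹)^2 * (ε ^ 2 *
          ((8*(N:ℝ)*δ^2+65)*(2*(N:ℝ)+2) + (16*(2*(N:ℝ)+2))*(6+(4*(N:ℝ)+8)*δ)))
        = ((8*(N:ℝ)*δ^2+65)*(2*(N:ℝ)+2) + (16*(2*(N:ℝ)+2))*(6+(4*(N:ℝ)+8)*δ))
            / (4*(N:ℝ)^2) := by
      field_simp
      ring
    rw [hrw, div_le_iff₀ (by positivity)]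
    -- numeric facts
    have f1 : 1 < (N:ℝ) * δ^2 := by
      have h := mul_lt_mul_of_pos_right hNd (by positivity : (0:ℝ) < δ^2)
      rwa [inv_mul_cancel₀ (by positivity : (δ:ℝ)^2 ≠ 0)] at h
    have f2 : (3200:ℝ) ≤ (N:ℝ) * δ := by
      have h : (N:ℝ) * δ * δ > 1 := by nlinarith
      nlinarith [hδinv, hδ0, mul_pos (mul_pos hNpos hδ0) hδ0]
    have f3 : (3200:ℝ)^2 ≤ (N:ℝ) := by nlinarith [f2, hδ0, hδ]
    nlinarith [f1, f2, f3, hδ0.le, hN1, hδ,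
      mul_le_mul_of_nonneg_left hδ (mul_nonneg hNpos.le hNpos.le),
      mul_nonneg (mul_nonneg hNpos.le hNpos.le) hδ0.le,
      mul_nonneg hNpos.le hδ0.le]
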